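/- The group with presentation ⟨Z_1, Z_2, …, Z_6 | Z_1 = Z_6 Z_2, Z_2 = Z_1 Z_3, Z_3 = Z_2 Z_4, Z_4 = Z_3 Z_5, Z_5 = Z_4 Z_6, Z_6 = Z_5 Z_1⟩ (i.e. Z_j = Z_{j−1} Z_{j+1} with indices taken mod 6) is isomorphic to the integer Heisenberg group H of upper unitriangular 3×3 matrices with integer entries. Consequently, the fundamental group of the 6-fold cyclic cover M_6 of S^3 branched along the trefoil knot, which admits this presentation, is isomorphic to H. -/

import Mathlib

/-- The integer Heisenberg group: upper unitriangular 3×3 integer matrices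
`!![1, a, c; 0, 1, b; 0, 0, 1]`, written in the coordinates `(a, b, c)`. -/
@[ext]
structure Heisenberg : Type where
  a : ℤ
  b : ℤ
  c : ℤ

namespace Heisenberg

instance : Mul Heisenberg :=
  ⟨fun x y => ⟨x.a + y.a, x.b + y.b, x.c + y.c + x.a * y.b⟩⟩
instance : One Heisenberg := ⟨⟨0, 0, 0⟩⟩
instance : Inv Heisenberg := ⟨fun x => ⟨-x.a, -x.b, -x.c + x.a * x.b⟩⟩

@[simp] theorem mul_a (x y : Heisenberg) : (x * y).a = x.a + y.a := rfl
@[simp] theorem mul_b (x y : Heisenberg) : (x * y).b = x.b + y.b := rfl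
@[simp] theorem mul_c (x y : Heisenberg) : (x * y).c = x.c + y.c + x.a * y.b := rfl
@[simp] theorem one_a : (1 : Heisenberg).a = 0 := rfl
@[simp] theorem one_b : (1 : Heisenberg).b = 0 := rfl
@[simp] theorem one_c : (1 : Heisenberg).c = 0 := rfl
@[simp] theorem inv_a (x : Heisenberg) : x⁻¹.a = -x.a := rfl
@[simp] theorem inv_b (x : Heisenberg) : x⁻¹.b = -x.b := rfl
@[simp] theorem inv_c (x : Heisenberg) : x⁻¹.c = -x.c + x.a * x.b := rfl

instance : Group Heisenberg where
  mul_assoc x y z := by ext <;> simp <;> ring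
  one_mul x := by ext <;> simp
  mul_one x := by ext <;> simp
  inv_mul_cancel x := by ext <;> simp

/-- The unitriangular matrix corresponding to an element of the Heisenberg
group. -/
def toMatrix (x : Heisenberg) : Matrix (Fin 3) (Fin 3) ℤ :=
  !![1, x.a, x.c; 0, 1, x.b; 0, 0, 1]

theorem toMatrix_mul (x y : Heisenberg) :
    toMatrix (x * y) = toMatrix x * toMatrix y := by
  simp only [toMatrix, Matrix.mul_fin_three, mul_a, mul_b, mul_c]
  ring_nf

end Heisenberg

/-- The relations `Z_j = Z_{j-1} Z_{j+1}` (indices mod 6), written as the words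
`Z_{j-1} Z_{j+1} Z_j⁻¹` in the free group on the six generators
`Z_0, …, Z_5`. -/
def trefoilRels : Set (FreeGroup (Fin 6)) :=
  Set.range fun j : Fin 6 =>
    FreeGroup.of (j - 1) * FreeGroup.of (j + 1) * (FreeGroup.of j)⁻¹

namespace Stmt17

def hgen : Fin 6 → Heisenberg :=
  ![⟨1,0,0⟩, ⟨1,1,1⟩, ⟨0,1,0⟩, ⟨-1,0,-1⟩, ⟨-1,-1,-1⟩, ⟨0,-1,-1⟩]

lemma hrel : ∀ r ∈ trefoilRels, FreeGroup.lift hgen r = 1 := by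
  rintro _ ⟨j, rfl⟩
  fin_cases j <;>
    · simp only [map_mul, map_inv, FreeGroup.lift_apply_of]
      ext <;> simp [hgen] <;> rfl

abbrev P := PresentedGroup trefoilRels

local notation "A" => (PresentedGroup.of 0 : P)
local notation "B" => (PresentedGroup.of 2 : P)

lemma rel (j : Fin 6) :
    (PresentedGroup.of (j - 1) : P) * PresentedGroup.of (j + 1) = PresentedGroup.of j := by
  have h : (PresentedGroup.mk trefoilRels)
      (FreeGroup.of (j - 1) * FreeGroup.of (j + 1) * (FreeGroup.of j)⁻¹) = 1 :=
    (QuotientGroup.eq_one_iff _).2 (Subgroup.subset_normalClosure ⟨j, rfl⟩)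
  simpa [map_mul, map_inv, PresentedGroup.of, mul_inv_eq_one] using h

lemma e1 : (PresentedGroup.of 1 : P) = A * B := by
  have h := rel 1
  rw [show (1:Fin 6)-1 = 0 from rfl, show (1:Fin 6)+1 = 2 from rfl] at h
  exact h.symm

lemma e3 : (PresentedGroup.of 3 : P) = B⁻¹ * A⁻¹ * B := by
  have h := rel 2
  rw [show (2:Fin 6)-1 = 1 from rfl, show (2:Fin 6)+1 = 3 from rfl, e1] at h
  rw [eq_inv_mul_of_mul_eq h]; group

lemma e4 : (PresentedGroup.of 4 : P) = B⁻¹ * B⁻¹ * A⁻¹ * B := by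
  have h := rel 3
  rw [show (3:Fin 6)-1 = 2 from rfl, show (3:Fin 6)+1 = 4 from rfl, e3] at h
  rw [eq_inv_mul_of_mul_eq h]; group

lemma e5 : (PresentedGroup.of 5 : P) = B⁻¹ * A * B⁻¹ * A⁻¹ * B := by
  have h := rel 4
  rw [show (4:Fin 6)-1 = 3 from rfl, show (4:Fin 6)+1 = 5 from rfl, e3, e4] at h
  rw [eq_inv_mul_of_mul_eq h]; group

lemma hq : (PresentedGroup.of 0 : P) * (PresentedGroup.of 2)⁻¹ * (PresentedGroup.of 0)⁻¹ *
    PresentedGroup.of 2 = PresentedGroup.of 2 * PresentedGroup.of 0 *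
    (PresentedGroup.of 2)⁻¹ * (PresentedGroup.of 0)⁻¹ := by
  have h0 := rel 0
  rw [show (0:Fin 6)-1 = 5 from rfl, show (0:Fin 6)+1 = 1 from rfl, e5, e1] at h0
  calc A*B⁻¹*A⁻¹*B = B*(B⁻¹*A*B⁻¹*A⁻¹*B*(A*B))*(B⁻¹*A⁻¹) := by group
    _ = B*A*(B⁻¹*A⁻¹) := by rw [h0]
    _ = B*A*B⁻¹*A⁻¹ := by group

lemma hq2 : (PresentedGroup.of 2 : P)⁻¹ * PresentedGroup.of 0 * PresentedGroup.of 2 *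
    (PresentedGroup.of 0)⁻¹ = PresentedGroup.of 0 * PresentedGroup.of 2 *
    (PresentedGroup.of 0)⁻¹ * (PresentedGroup.of 2)⁻¹ := by
  calc B⁻¹*A*B*A⁻¹ = (A*B⁻¹*A⁻¹*B)⁻¹ := by group
    _ = (B*A*B⁻¹*A⁻¹)⁻¹ := by rw [hq]
    _ = A*B*A⁻¹*B⁻¹ := by group

lemma commB' : ((PresentedGroup.of 0 : P) * PresentedGroup.of 2 * (PresentedGroup.of 0)⁻¹ *
    (PresentedGroup.of 2)⁻¹) * PresentedGroup.of 2 = PresentedGroup.of 2 *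
    ((PresentedGroup.of 0 : P) * PresentedGroup.of 2 * (PresentedGroup.of 0)⁻¹ *
      (PresentedGroup.of 2)⁻¹) := by
  calc (A*B*A⁻¹*B⁻¹)*B = B*(B⁻¹*A*B*A⁻¹) := by group
    _ = B*(A*B*A⁻¹*B⁻¹) := by rw [hq2]

lemma E1 : (PresentedGroup.of 0 : P)⁻¹ * PresentedGroup.of 2 * PresentedGroup.of 0 =
    PresentedGroup.of 2 * (PresentedGroup.of 2 * PresentedGroup.of 0 *
      (PresentedGroup.of 2)⁻¹ * (PresentedGroup.of 0)⁻¹) := by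
  have h5 := rel 5
  rw [show (5:Fin 6)-1 = 4 from rfl, show (5:Fin 6)+1 = 0 from rfl, e4, e5] at h5
  calc A⁻¹*B*A = B*B*(B⁻¹*B⁻¹*A⁻¹*B*A) := by group
    _ = B*B*(B⁻¹*A*B⁻¹*A⁻¹*B) := by rw [h5]
    _ = B*(A*B⁻¹*A⁻¹*B) := by group
    _ = B*(B*A*B⁻¹*A⁻¹) := by rw [hq]

lemma commA' : ((PresentedGroup.of 0 : P) * PresentedGroup.of 2 * (PresentedGroup.of 0)⁻¹ *
    (PresentedGroup.of 2)⁻¹) * PresentedGroup.of 0 = PresentedGroup.of 0 *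
    ((PresentedGroup.of 0 : P) * PresentedGroup.of 2 * (PresentedGroup.of 0)⁻¹ *
      (PresentedGroup.of 2)⁻¹) := by
  calc (A*B*A⁻¹*B⁻¹)*A = A*B*(A⁻¹*B*A)⁻¹ := by group
    _ = A*B*(B*(B*A*B⁻¹*A⁻¹))⁻¹ := by rw [E1]
    _ = A*(B*(A*B*A⁻¹*B⁻¹))*B⁻¹ := by group
    _ = A*((A*B*A⁻¹*B⁻¹)*B)*B⁻¹ := by rw [commB']
    _ = A*(A*B*A⁻¹*B⁻¹) := by group

/-- the commutator, which is central. -/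
def zc : P := PresentedGroup.of 0 * PresentedGroup.of 2 *
    (PresentedGroup.of 0)⁻¹ * (PresentedGroup.of 2)⁻¹

lemma commB : Commute zc (PresentedGroup.of 2 : P) := commB'

lemma commA : Commute zc (PresentedGroup.of 0 : P) := commA'

/-- conjugation: `B A B⁻¹ = A zc⁻¹`. -/
lemma base : (PresentedGroup.of 2 : P) * PresentedGroup.of 0 * (PresentedGroup.of 2)⁻¹ =
    PresentedGroup.of 0 * zc⁻¹ := by
  have h : zc⁻¹ * A = A * zc⁻¹ := (commA.inv_left).eq
  calc B*A*B⁻¹ = zc⁻¹*A := by rw [zc]; group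
    _ = A*zc⁻¹ := h

lemma hstep : (PresentedGroup.of 2 : P) * PresentedGroup.of 0 =
    PresentedGroup.of 0 * zc⁻¹ * PresentedGroup.of 2 := by
  calc B * A = (B*A*B⁻¹)*B := by group
    _ = A*zc⁻¹*B := by rw [base]

lemma hstep' : (PresentedGroup.of 2 : P)⁻¹ * PresentedGroup.of 0 =
    PresentedGroup.of 0 * zc * (PresentedGroup.of 2)⁻¹ := by
  have h1 : A * B⁻¹ = B⁻¹*A*zc⁻¹ := by
    calc A*B⁻¹ = B⁻¹*(B*A)*B⁻¹ := by group
      _ = B⁻¹*(A*zc⁻¹*B)*B⁻¹ := by rw [hstep]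
      _ = B⁻¹*A*zc⁻¹ := by group
  have h2 : A*B⁻¹*zc = B⁻¹*A := by rw [h1]; group
  have cb' : B⁻¹ * zc = zc * B⁻¹ := (commB.inv_right).eq.symm
  calc B⁻¹*A = A*B⁻¹*zc := h2.symm
    _ = A*(B⁻¹*zc) := by group
    _ = A*(zc*B⁻¹) := by rw [cb']
    _ = A*zc*B⁻¹ := by group

lemma hcomB' (n : ℤ) : (PresentedGroup.of 2 : P)^n * zc⁻¹ = zc⁻¹ * (PresentedGroup.of 2 : P)^n :=
  ((commB.inv_left).zpow_right n).eq.symm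

lemma hcomB'' (n : ℤ) : (PresentedGroup.of 2 : P)^n * zc = zc * (PresentedGroup.of 2 : P)^n :=
  (commB.zpow_right n).eq.symm

lemma l2 : ∀ b : ℤ, (PresentedGroup.of 2 : P)^b * PresentedGroup.of 0 =
    PresentedGroup.of 0 * zc^(-b) * (PresentedGroup.of 2 : P)^b := by
  intro b
  induction b using Int.induction_on with
  | zero => simp
  | succ k ih =>
    calc B^((k:ℤ)+1)*A = B^(k:ℤ)*(B*A) := by rw [zpow_add_one]; group
      _ = B^(k:ℤ)*(A*zc⁻¹*B) := by rw [hstep]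
      _ = A*zc^(-(k:ℤ))*(B^(k:ℤ)*zc⁻¹)*B := by rw [← mul_assoc, ← mul_assoc, ih]; group
      _ = A*zc^(-(k:ℤ))*(zc⁻¹*B^(k:ℤ))*B := by rw [hcomB']
      _ = A*zc^(-((k:ℤ)+1))*B^((k:ℤ)+1) := by group
  | pred k ih =>
    calc B^(-(k:ℤ)-1)*A = B^(-(k:ℤ))*(B⁻¹*A) := by rw [zpow_sub_one]; group
      _ = B^(-(k:ℤ))*(A*zc*B⁻¹) := by rw [hstep']
      _ = A*zc^((k:ℤ))*(B^(-(k:ℤ))*zc)*B⁻¹ := by rw [← mul_assoc, ← mul_assoc, ih]; group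
      _ = A*zc^((k:ℤ))*(zc*B^(-(k:ℤ)))*B⁻¹ := by rw [hcomB'']
      _ = A*zc^(-(-(k:ℤ)-1))*B^(-(k:ℤ)-1) := by group

lemma keyl (a b : ℤ) : (PresentedGroup.of 2 : P)^b * (PresentedGroup.of 0 : P)^a =
    (PresentedGroup.of 0 : P)^a * zc^(-(a*b)) * (PresentedGroup.of 2 : P)^b := by
  have c1 : B^b * A * (B^b)⁻¹ = A * zc^(-b) := by rw [l2 b]; group
  have c2 : B^b * A^a * (B^b)⁻¹ = (A * zc^(-b))^a := by rw [← conj_zpow, c1]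
  have c3 : (A*zc^(-b))^a = A^a * zc^(-(a*b)) := by
    rw [(commA.symm.zpow_right (-b)).mul_zpow, ← zpow_mul]
    congr 1
    ring
  have c4 : B^b * A^a * (B^b)⁻¹ = A^a * zc^(-(a*b)) := c2.trans c3
  calc B^b * A^a = (B^b * A^a * (B^b)⁻¹) * B^b := by group
    _ = A^a * zc^(-(a*b)) * B^b := by rw [c4]

lemma hcomA (m n : ℤ) : zc^m * (PresentedGroup.of 0 : P)^n =
    (PresentedGroup.of 0 : P)^n * zc^m := ((commA.zpow_left m).zpow_right n).eq

lemma hcomB (m n : ℤ) : zc^m * (PresentedGroup.of 2 : P)^n =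
    (PresentedGroup.of 2 : P)^n * zc^m := ((commB.zpow_left m).zpow_right n).eq

lemma comb (a₁ b₁ c₁ a₂ b₂ c₂ : ℤ) :
    ((PresentedGroup.of 0 : P)^a₁ * (PresentedGroup.of 2 : P)^b₁ * zc^c₁) *
      ((PresentedGroup.of 0 : P)^a₂ * (PresentedGroup.of 2 : P)^b₂ * zc^c₂) =
    (PresentedGroup.of 0 : P)^(a₁+a₂) * (PresentedGroup.of 2 : P)^(b₁+b₂) *
      zc^(c₁+c₂-a₂*b₁) := by
  calc (A^a₁*B^b₁*zc^c₁)*(A^a₂*B^b₂*zc^c₂)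
      = A^a₁*B^b₁*(zc^c₁*A^a₂)*B^b₂*zc^c₂ := by group
    _ = A^a₁*B^b₁*(A^a₂*zc^c₁)*B^b₂*zc^c₂ := by rw [hcomA]
    _ = A^a₁*(B^b₁*A^a₂)*(zc^c₁*B^b₂)*zc^c₂ := by group
    _ = A^a₁*(A^a₂*zc^(-(a₂*b₁))*B^b₁)*(B^b₂*zc^c₁)*zc^c₂ := by rw [keyl, hcomB]
    _ = A^a₁*A^a₂*(zc^(-(a₂*b₁))*B^b₁)*B^b₂*zc^c₁*zc^c₂ := by group
    _ = A^a₁*A^a₂*(B^b₁*zc^(-(a₂*b₁)))*B^b₂*zc^c₁*zc^c₂ := by rw [hcomB]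
    _ = A^a₁*A^a₂*B^b₁*(zc^(-(a₂*b₁))*B^b₂)*zc^c₁*zc^c₂ := by group
    _ = A^a₁*A^a₂*B^b₁*(B^b₂*zc^(-(a₂*b₁)))*zc^c₁*zc^c₂ := by rw [hcomB]
    _ = A^(a₁+a₂)*B^(b₁+b₂)*(zc^(-(a₂*b₁))*zc^c₁*zc^c₂) := by group
    _ = A^(a₁+a₂)*B^(b₁+b₂)*zc^(c₁+c₂-a₂*b₁) := by
        rw [← zpow_add, ← zpow_add]; congr 1; ring

def psiFun (g : Heisenberg) : P :=
  (PresentedGroup.of 0 : P)^g.a * (PresentedGroup.of 2 : P)^g.b * zc^(g.c - g.a*g.b)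

def psi : Heisenberg →* P where
  toFun := psiFun
  map_one' := by simp [psiFun]
  map_mul' g h := by
    simp only [psiFun, Heisenberg.mul_a, Heisenberg.mul_b, Heisenberg.mul_c]
    rw [comb]
    congr 1
    ring

def phi : P →* Heisenberg := PresentedGroup.toGroup hrel

lemma phi_of (j : Fin 6) : phi (PresentedGroup.of j) = hgen j := PresentedGroup.toGroup.of hrel

lemma xpow (n : ℤ) : (⟨1,0,0⟩ : Heisenberg)^n = ⟨n,0,0⟩ := by
  induction n using Int.induction_on with
  | zero => rfl
  | succ k ih => rw [zpow_add_one, ih]; ext <;> simp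
  | pred k ih => rw [zpow_sub_one, ih]; ext <;> simp [Inv.inv] <;> omega

lemma ypow (n : ℤ) : (⟨0,1,0⟩ : Heisenberg)^n = ⟨0,n,0⟩ := by
  induction n using Int.induction_on with
  | zero => rfl
  | succ k ih => rw [zpow_add_one, ih]; ext <;> simp
  | pred k ih => rw [zpow_sub_one, ih]; ext <;> simp [Inv.inv] <;> omega

lemma zpowH (n : ℤ) : (⟨0,0,1⟩ : Heisenberg)^n = ⟨0,0,n⟩ := by
  induction n using Int.induction_on with
  | zero => rfl
  | succ k ih => rw [zpow_add_one, ih]; ext <;> simp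
  | pred k ih => rw [zpow_sub_one, ih]; ext <;> simp [Inv.inv] <;> omega

lemma phi_zc : phi zc = ⟨0,0,1⟩ := by
  rw [zc]
  simp only [map_mul, map_inv, phi_of]
  ext <;> simp [hgen] <;> rfl

lemma phi_psi (g : Heisenberg) : phi (psi g) = g := by
  show phi (psiFun g) = g
  simp only [psiFun, map_mul, map_zpow, phi_of, phi_zc]
  rw [show hgen 0 = ⟨1,0,0⟩ from rfl, show hgen 2 = ⟨0,1,0⟩ from rfl, xpow, ypow, zpowH]
  ext <;> simp <;> ring

lemma f3 : (PresentedGroup.of 3 : P) = A⁻¹ * zc⁻¹ := by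
  rw [e3, zc]
  calc B⁻¹*A⁻¹*B = A⁻¹*(A*B⁻¹*A⁻¹*B) := by group
    _ = A⁻¹*(B*A*B⁻¹*A⁻¹) := by rw [hq]
    _ = A⁻¹*(A*B*A⁻¹*B⁻¹)⁻¹ := by group

lemma f4 : (PresentedGroup.of 4 : P) = B⁻¹ * A⁻¹ * zc⁻¹ := by
  rw [e4, zc]
  calc B⁻¹*B⁻¹*A⁻¹*B = B⁻¹*(A⁻¹*(A*B⁻¹*A⁻¹*B)) := by group
    _ = B⁻¹*(A⁻¹*(B*A*B⁻¹*A⁻¹)) := by rw [hq]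
    _ = B⁻¹*A⁻¹*(A*B*A⁻¹*B⁻¹)⁻¹ := by group

lemma f5 : (PresentedGroup.of 5 : P) = B⁻¹ * zc⁻¹ := by
  rw [e5, zc]
  calc B⁻¹*A*B⁻¹*A⁻¹*B = B⁻¹*(A*B⁻¹*A⁻¹*B) := by group
    _ = B⁻¹*(B*A*B⁻¹*A⁻¹) := by rw [hq]
    _ = B⁻¹*(A*B*A⁻¹*B⁻¹)⁻¹ := by group

lemma psi_phi_of (j : Fin 6) : psi (phi (PresentedGroup.of j)) = PresentedGroup.of j := by
  rw [phi_of]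
  fin_cases j
  · show psiFun ⟨1,0,0⟩ = A
    simp only [psiFun]
    norm_num
  · show psiFun ⟨1,1,1⟩ = (PresentedGroup.of 1 : P)
    simp only [psiFun]
    rw [e1]
    norm_num
  · show psiFun ⟨0,1,0⟩ = B
    simp only [psiFun]
    norm_num
  · show psiFun ⟨-1,0,-1⟩ = (PresentedGroup.of 3 : P)
    simp only [psiFun]
    rw [f3]
    norm_num
  · show psiFun ⟨-1,-1,-1⟩ = (PresentedGroup.of 4 : P)
    simp only [psiFun]
    norm_num
    rw [show ((zc:P)^(2:ℕ))⁻¹ = zc⁻¹*zc⁻¹ from by group, f4, zc]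
    group
  · show psiFun ⟨0,-1,-1⟩ = (PresentedGroup.of 5 : P)
    simp only [psiFun]
    rw [f5]
    norm_num

lemma psi_phi (p : P) : psi (phi p) = p := by
  have h : psi.comp phi = MonoidHom.id P := PresentedGroup.ext fun j => psi_phi_of j
  calc psi (phi p) = (psi.comp phi) p := rfl
    _ = p := by rw [h]; rfl

def iso : P ≃* Heisenberg where
  toFun := phi
  invFun := psi
  left_inv := psi_phi
  right_inv := phi_psi
  map_mul' := phi.map_mul

end Stmt17

/-!
STATEMENT 17. The group with presentation
⟨Z₁, …, Z₆ | Z_j = Z_{j−1} Z_{j+1} (indices mod 6)⟩ is isomorphic to the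
integer Heisenberg group H of upper unitriangular 3×3 matrices with integer
entries.  Consequently, the fundamental group of the 6-fold cyclic cover M₆ of
S³ branched along the trefoil knot, which admits this presentation, is
isomorphic to H.  (Here M₆ = F_{φ⁶} ∪ (K × D²) for the Milnor fibration of
z₀² + z₁³, with fiber F, monodromy φ of order six and binding the trefoil
knot K.)
-/
theorem stmt_17
    -- the 6-fold cyclic cover M₆ of S³ branched along the trefoil knot
    (M6 : Type) [TopologicalSpace M6] (x : M6)
    -- π₁(M₆) admits the presentation ⟨Z₁,…,Z₆ | Z_j = Z_{j−1} Z_{j+1}⟩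
    (hpres : Nonempty (FundamentalGroup M6 x ≃* PresentedGroup trefoilRels)) :
    Nonempty (PresentedGroup trefoilRels ≃* Heisenberg) ∧
    Nonempty (FundamentalGroup M6 x ≃* Heisenberg) := by
  obtain ⟨e⟩ := hpres
  exact ⟨⟨Stmt17.iso⟩, ⟨e.trans Stmt17.iso⟩⟩
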